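/- For all integers m, n ≥ 1 and all indices i, j ∈ {0,…,m−1} with j = i + n, the (i,j) entry of X_n equals 1; moreover each diagonal entry satisfies (X_n) i i = ∏_{u=1}^{n} (9^i − 9^{u−1}). -/

import Mathlib

/-- The m×m matrix B over ℤ₂ with B i i = 9^i, B i (i+1) = 1 and all other entries 0. -/
noncomputable def Bmat (m : ℕ) : Matrix (Fin m) (Fin m) ℤ_[2] := fun i j =>
  if (j : ℕ) = i then 9 ^ (i : ℕ) else if (j : ℕ) = (i : ℕ) + 1 then 1 else 0

/-- X n = (B - 9⁰·1)(B - 9¹·1)⋯(B - 9^{n-1}·1). -/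
noncomputable def Xmat (m n : ℕ) : Matrix (Fin m) (Fin m) ℤ_[2] :=
  ((List.range n).map (fun u => Bmat m - (9 : ℤ_[2]) ^ u • (1 : Matrix (Fin m) (Fin m) ℤ_[2]))).prod

lemma step (m u : ℕ) (M : Matrix (Fin m) (Fin m) ℤ_[2]) (i j : Fin m) :
    (M * (Bmat m - (9:ℤ_[2])^u • 1)) i j
      = M i j * ((9:ℤ_[2])^(j:ℕ) - 9^u)
        + ∑ k : Fin m, (if (j:ℕ) = (k:ℕ)+1 then M i k else 0) := by
  rw [Matrix.mul_apply]
  have h1 : M i j * ((9:ℤ_[2])^(j:ℕ) - 9^u)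
      = ∑ k : Fin m, (if k = j then M i k * ((9:ℤ_[2])^(k:ℕ) - 9^u) else 0) := by
    rw [Finset.sum_ite_eq' Finset.univ j (fun k => M i k * ((9:ℤ_[2])^(k:ℕ) - 9^u))]
    simp
  rw [h1, ← Finset.sum_add_distrib]
  apply Finset.sum_congr rfl
  intro k _
  simp only [Matrix.sub_apply, Matrix.smul_apply, Matrix.one_apply, Bmat, smul_eq_mul]
  rcases eq_or_ne k j with h | h
  · subst h; simp
  · have h' : (j:ℕ) ≠ (k:ℕ) := fun hc => h (Fin.ext hc.symm)
    simp [h, h']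

lemma Xmat_succ (m n : ℕ) :
    Xmat m (n+1) = Xmat m n * (Bmat m - (9:ℤ_[2])^n • 1) := by
  simp [Xmat, List.range_succ]

lemma key (m : ℕ) : ∀ n : ℕ, ∀ i j : Fin m,
    ((j:ℕ) < i → Xmat m n i j = 0) ∧
    ((i:ℕ) + n < j → Xmat m n i j = 0) ∧
    ((j:ℕ) = (i:ℕ) + n → Xmat m n i j = 1) ∧
    (j = i → Xmat m n i j = ∏ u ∈ Finset.range n, ((9:ℤ_[2])^(i:ℕ) - 9^u)) := by
  intro n
  induction n with
  | zero =>
    intro i j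
    have hX : Xmat m 0 = 1 := by simp [Xmat]
    refine ⟨?_, ?_, ?_, ?_⟩ <;> intro h <;>
      simp [hX, Matrix.one_apply] <;>
      first
      | (intro hc; subst hc; omega)
      | (exact Fin.ext (by omega))
      | (subst h)
  | succ n ih =>
    intro i j
    rw [Xmat_succ, step]
    refine ⟨?_, ?_, ?_, ?_⟩ <;> intro h
    · rw [(ih i j).1 (by omega), Finset.sum_eq_zero, zero_mul, zero_add]
      intro k _
      split_ifs with hk
      · exact (ih i k).1 (by omega)
      · rfl
    · rw [(ih i j).2.1 (by omega), Finset.sum_eq_zero, zero_mul, zero_add]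
      intro k _
      split_ifs with hk
      · exact (ih i k).2.1 (by omega)
      · rfl
    · have hj : (j:ℕ) = (i:ℕ) + n + 1 := by omega
      have hmem : (i:ℕ) + n < m := by have := j.isLt; omega
      rw [(ih i j).2.1 (by omega), zero_mul, zero_add]
      rw [Finset.sum_eq_single (⟨(i:ℕ)+n, hmem⟩ : Fin m)]
      · simp [hj, (ih i ⟨(i:ℕ)+n, hmem⟩).2.2.1 rfl]
      · intro k _ hk
        split_ifs with hc
        · exact absurd (Fin.ext (by omega : (k:ℕ) = (i:ℕ)+n)) hk
        · rfl
      · simp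
    · subst h
      rw [(ih j j).2.2.2 rfl, Finset.sum_eq_zero, add_zero, Finset.prod_range_succ]
      intro k _
      split_ifs with hk
      · exact (ih j k).1 (by omega)
      · rfl

theorem Xmat_top_band_and_diag (m n : ℕ) (hm : 1 ≤ m) (hn : 1 ≤ n) :
    (∀ i j : Fin m, (j : ℕ) = (i : ℕ) + n → Xmat m n i j = 1) ∧
    (∀ i : Fin m, Xmat m n i i =
      ∏ u ∈ Finset.Icc 1 n, ((9 : ℤ_[2]) ^ (i : ℕ) - 9 ^ (u - 1))) := by
  constructor
  · intro i j h
    exact (key m n i j).2.2.1 h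
  · intro i
    rw [(key m n i i).2.2.2 rfl, show Finset.Icc 1 n = Finset.Ico 1 (n+1) by
      rw [Finset.Ico_add_one_right_eq_Icc], Finset.prod_Ico_eq_prod_range]
    simp
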